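/- arXiv:1611.04207 — 4 statements merged into one kernel-verified Lean document; each statement's English description precedes it below -/
import Mathlib

section
/- Let E be a real Banach space, Ω ⊆ E an open set, f : E → E a map that is Fréchet differentiable on Ω with derivative f', and x* ∈ Ω with f(x*) = 0, such that f' is continuous (in operator norm) at x* and f'(x*) is invertible. Then the Newton iteration map N(x) := x − f'(x)⁻¹ (f x), defined on the ball where f'(x) is invertible, satisfies lim_{x → x*} ‖N(x) − x*‖ / ‖x − x*‖ = 0; precisely: for every ε > 0 there exists δ > 0 such that B_δ(x*) ⊆ Ω, f'(x) is invertible for all x ∈ B_δ(x*), and ‖N(x) − x*‖ ≤ ε ‖x − x*‖ for all x ∈ B_δ(x*). -/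
/-- Normed-space form of Lemma 4: the Newton iteration map
`N x = x - (f' x)⁻¹ (f x)` satisfies `‖N x - x*‖ / ‖x - x*‖ → 0` as `x → x*`. -/
theorem newton_map_superlinear
    {E : Type*} [NormedAddCommGroup E] [NormedSpace ℝ E] [CompleteSpace E]
    {Ω : Set E} (hΩ : IsOpen Ω) (f : E → E) (f' : E → (E →L[ℝ] E))
    (hdiff : ∀ x ∈ Ω, HasFDerivAt f (f' x) x)
    {xstar : E} (hx : xstar ∈ Ω) (hsol : f xstar = 0)
    (hcont : ContinuousAt f' xstar)
    (hinv : ∃ e : E ≃L[ℝ] E, (e : E →L[ℝ] E) = f' xstar) :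
    ∀ ε > 0, ∃ δ > 0, Metric.ball xstar δ ⊆ Ω ∧
      (∀ x ∈ Metric.ball xstar δ, ∃ e : E ≃L[ℝ] E, (e : E →L[ℝ] E) = f' x) ∧
      ∀ x ∈ Metric.ball xstar δ,
        ‖(x - (f' x).inverse (f x)) - xstar‖ ≤ ε * ‖x - xstar‖ := by
  obtain ⟨e₀, he₀⟩ := hinv
  intro ε hε
  have hunit0 : IsUnit (f' xstar) := ⟨e₀.toUnit, he₀⟩
  set C : ℝ := ‖Ring.inverse (f' xstar)‖ + 1 with hC
  have hCpos : 0 < C := by positivity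
  set ε' : ℝ := ε / (2 * C) with hε'
  have hε'pos : 0 < ε' := by positivity
  -- eventual facts near xstar
  have h1 : ∀ᶠ x in nhds xstar, x ∈ Ω := hΩ.mem_nhds hx
  have h2 : ∀ᶠ x in nhds xstar, IsUnit (f' x) :=
    hcont (Units.isOpen.mem_nhds hunit0)
  have hcontinv : ContinuousAt (fun x => Ring.inverse (f' x)) xstar := by
    have h := NormedRing.inverse_continuousAt hunit0.unit
    rw [hunit0.unit_spec] at h
    exact h.comp hcont
  have h3 : ∀ᶠ x in nhds xstar,
      Ring.inverse (f' x) ∈ Metric.closedBall (Ring.inverse (f' xstar)) 1 :=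
    hcontinv (Metric.closedBall_mem_nhds _ one_pos)
  have h4 : ∀ᶠ x in nhds xstar, f' x ∈ Metric.closedBall (f' xstar) ε' :=
    hcont (Metric.closedBall_mem_nhds _ hε'pos)
  have h5 : ∀ᶠ x in nhds xstar,
      ‖f x - f xstar - f' xstar (x - xstar)‖ ≤ ε' * ‖x - xstar‖ := by
    have := (hdiff xstar hx).isLittleO.def hε'pos
    filter_upwards [this] with x hx'
    simpa using hx'
  obtain ⟨δ, hδpos, hδ⟩ := Metric.eventually_nhds_iff_ball.mp
    ((((h1.and h2).and h3).and h4).and h5)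
  refine ⟨δ, hδpos, ?_, ?_, ?_⟩
  · intro x hxb; exact (hδ x hxb).1.1.1.1
  · intro x hxb
    have hu : IsUnit (f' x) := (hδ x hxb).1.1.1.2
    refine ⟨ContinuousLinearEquiv.unitsEquiv ℝ E hu.unit, ?_⟩
    ext m
    rw [ContinuousLinearEquiv.coe_coe, ContinuousLinearEquiv.unitsEquiv_apply, hu.unit_spec]
  · intro x hxb
    obtain ⟨⟨⟨⟨hxΩ, hu⟩, h3x⟩, h4x⟩, h5x⟩ := hδ x hxb
    -- the continuous linear equiv with coe = f' x
    set e : E ≃L[ℝ] E := ContinuousLinearEquiv.unitsEquiv ℝ E hu.unit with he_def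
    have he : (e : E →L[ℝ] E) = f' x := by
      ext m
      rw [ContinuousLinearEquiv.coe_coe, ContinuousLinearEquiv.unitsEquiv_apply, hu.unit_spec]
    have hkey : (f' x).inverse ((f' x) (x - xstar)) = x - xstar := by
      rw [← he, ContinuousLinearMap.inverse_equiv]
      exact e.symm_apply_apply _
    have heq : (x - (f' x).inverse (f x)) - xstar
        = (f' x).inverse ((f' x) (x - xstar) - f x) := by
      rw [map_sub, hkey]; abel
    have hsplit : (f' x) (x - xstar) - f x
        = (f' x - f' xstar) (x - xstar) - (f x - f xstar - f' xstar (x - xstar)) := by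
      simp [ContinuousLinearMap.sub_apply, hsol]
    have hnorm1 : ‖(f' x) (x - xstar) - f x‖ ≤ 2 * ε' * ‖x - xstar‖ := by
      rw [hsplit]
      calc ‖(f' x - f' xstar) (x - xstar) - (f x - f xstar - f' xstar (x - xstar))‖
          ≤ ‖(f' x - f' xstar) (x - xstar)‖ + ‖f x - f xstar - f' xstar (x - xstar)‖ :=
            norm_sub_le _ _
        _ ≤ ‖f' x - f' xstar‖ * ‖x - xstar‖ + ε' * ‖x - xstar‖ := by
            gcongr; exact (f' x - f' xstar).le_opNorm _
        _ ≤ ε' * ‖x - xstar‖ + ε' * ‖x - xstar‖ := by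
            have h4' : ‖f' x - f' xstar‖ ≤ ε' := by simpa [dist_eq_norm] using h4x
            nlinarith [norm_nonneg (x - xstar)]
        _ = 2 * ε' * ‖x - xstar‖ := by ring
    have hinvx : (f' x).inverse = Ring.inverse (f' x) :=
      (congrFun ContinuousLinearMap.ringInverse_eq_inverse (f' x)).symm
    have hinvbd : ‖(f' x).inverse‖ ≤ C := by
      rw [hinvx]
      calc ‖Ring.inverse (f' x)‖
          = ‖(Ring.inverse (f' x) - Ring.inverse (f' xstar)) + Ring.inverse (f' xstar)‖ := by
            rw [sub_add_cancel]
        _ ≤ ‖Ring.inverse (f' x) - Ring.inverse (f' xstar)‖ + ‖Ring.inverse (f' xstar)‖ :=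
            norm_add_le _ _
        _ ≤ 1 + ‖Ring.inverse (f' xstar)‖ := by
            gcongr; simpa [dist_eq_norm] using h3x
        _ = C := by rw [hC]; ring
    calc ‖(x - (f' x).inverse (f x)) - xstar‖
        = ‖(f' x).inverse ((f' x) (x - xstar) - f x)‖ := by rw [heq]
      _ ≤ ‖(f' x).inverse‖ * ‖(f' x) (x - xstar) - f x‖ :=
          ((f' x).inverse).le_opNorm _
      _ ≤ C * (2 * ε' * ‖x - xstar‖) :=
          mul_le_mul hinvbd hnorm1 (norm_nonneg _) hCpos.le
      _ = ε * ‖x - xstar‖ := by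
          rw [hε']; field_simp
end

section
/- Let E be a real Banach space, Ω ⊆ E an open set, f : E → E Fréchet differentiable on Ω with derivative f', and x* ∈ Ω with f(x*) = 0, such that f' is continuous (in operator norm) at x* and f'(x*) is invertible. Then there exists δ > 0 such that B_δ(x*) ⊆ Ω, f'(x) is invertible for every x ∈ B_δ(x*), and the Newton iteration map N(x) := x − f'(x)⁻¹ (f x) satisfies ‖N(x) − x*‖ ≤ (1/2) ‖x − x*‖ for every x ∈ B_δ(x*); in particular N maps B_δ(x*) into itself. -/
open Topology Filter Metric
/-- Contraction estimate for the Newton iteration map: there is a ball around `x*` on which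
`f'` is invertible and `‖N x - x*‖ ≤ (1/2) ‖x - x*‖`, where `N x = x - (f' x)⁻¹ (f x)`;
in particular `N` maps the ball into itself. -/
theorem newton_map_contraction
    {E : Type*} [NormedAddCommGroup E] [NormedSpace ℝ E] [CompleteSpace E]
    {Ω : Set E} (hΩ : IsOpen Ω) (f : E → E) (f' : E → (E →L[ℝ] E))
    (hdiff : ∀ x ∈ Ω, HasFDerivAt f (f' x) x)
    {xstar : E} (hx : xstar ∈ Ω) (hsol : f xstar = 0)
    (hcont : ContinuousAt f' xstar)
    (hinv : ∃ e : E ≃L[ℝ] E, (e : E →L[ℝ] E) = f' xstar) :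
    ∃ δ > 0, Metric.ball xstar δ ⊆ Ω ∧
      (∀ x ∈ Metric.ball xstar δ, ∃ e : E ≃L[ℝ] E, (e : E →L[ℝ] E) = f' x) ∧
      (∀ x ∈ Metric.ball xstar δ,
        ‖(x - (f' x).inverse (f x)) - xstar‖ ≤ (1 / 2) * ‖x - xstar‖) ∧
      ∀ x ∈ Metric.ball xstar δ,
        (x - (f' x).inverse (f x)) ∈ Metric.ball xstar δ := by
  obtain ⟨e0, he0⟩ := hinv
  set u : (E →L[ℝ] E)ˣ := e0.toUnit with hu_def
  have hu : (u : E →L[ℝ] E) = f' xstar := he0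
  set C : ℝ := ‖Ring.inverse (f' xstar)‖ + 1 with hC
  have hCpos : 0 < C := by positivity
  set ε : ℝ := 1 / (4 * C) with hε
  have hεpos : 0 < ε := by positivity
  -- eventually statements
  have h1 : ∀ᶠ y in 𝓝 xstar, y ∈ Ω := hΩ.mem_nhds hx
  have h2 : ∀ᶠ y in 𝓝 xstar, IsUnit (f' y) := by
    exact hcont.eventually_mem (s := {A : E →L[ℝ] E | IsUnit A})
      (Units.isOpen.mem_nhds (hu ▸ u.isUnit))
  have h3 : ∀ᶠ y in 𝓝 xstar, ‖f' y - f' xstar‖ < ε := by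
    have := Metric.tendsto_nhds.1 hcont ε hεpos
    simpa [dist_eq_norm] using this
  have h4 : ∀ᶠ y in 𝓝 xstar, ‖Ring.inverse (f' y)‖ < C := by
    have hc : ContinuousAt (fun y => Ring.inverse (f' y)) xstar := by
      exact ContinuousAt.comp (g := Ring.inverse) (by rw [← hu]; exact NormedRing.inverse_continuousAt u) hcont
    have hc2 : ContinuousAt (fun y => ‖Ring.inverse (f' y)‖) xstar :=
      continuous_norm.continuousAt.comp hc
    apply hc2.eventually_mem (s := Set.Iio C)
    exact Iio_mem_nhds (by simp [hC])
  obtain ⟨δ, hδpos, hδ⟩ := Metric.eventually_nhds_iff_ball.1 ((h1.and h2).and (h3.and h4))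
  have hsub : Metric.ball xstar δ ⊆ Ω := fun y hy => ((hδ y hy).1).1
  have hxstar_mem : xstar ∈ Metric.ball xstar δ := Metric.mem_ball_self hδpos
  -- the key estimate
  have key : ∀ x ∈ Metric.ball xstar δ,
      ‖(x - (f' x).inverse (f x)) - xstar‖ ≤ (1 / 2) * ‖x - xstar‖ := by
    intro x hxmem
    obtain ⟨v, hv⟩ := (hδ x hxmem).1.2
    set B : E →L[ℝ] E := Ring.inverse (f' x) with hB
    have hBv : B = (↑v⁻¹ : E →L[ℝ] E) := by rw [hB, ← hv, Ring.inverse_unit]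
    have hinv_eq : (f' x).inverse = B := by
      rw [hB, ← ContinuousLinearMap.ringInverse_eq_inverse]
    have hBnorm : ‖B‖ < C := (hδ x hxmem).2.2
    -- mean value inequality for g y = f y - f' x y on the ball
    have hmv : ‖(f x - f' x x) - (f xstar - f' x xstar)‖ ≤ (2 * ε) * ‖x - xstar‖ := by
      have := Convex.norm_image_sub_le_of_norm_hasFDerivWithin_le
        (f := fun y => f y - f' x y) (f' := fun y => f' y - f' x)
        (s := Metric.ball xstar δ)
        (fun y hy => ((hdiff y (hsub hy)).sub (f' x).hasFDerivAt).hasFDerivWithinAt)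
        (fun y hy => by
          calc ‖f' y - f' x‖ ≤ ‖f' y - f' xstar‖ + ‖f' xstar - f' x‖ := by
                have : f' y - f' x = (f' y - f' xstar) + (f' xstar - f' x) := by abel
                rw [this]; exact norm_add_le _ _
            _ ≤ ε + ε := by
                have h5 := (hδ y hy).2.1
                have h6 := (hδ x hxmem).2.1
                rw [← norm_neg (f' xstar - f' x)] at *
                simp only [neg_sub] at *
                linarith
            _ = 2 * ε := by ring)
        (convex_ball xstar δ) hxstar_mem hxmem
      simpa using this
    have hlin : f' x x - f' x xstar = f' x (x - xstar) := ((f' x).map_sub x xstar).symm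
    have hmv2 : ‖f x - f' x (x - xstar)‖ ≤ (2 * ε) * ‖x - xstar‖ := by
      rw [hsol] at hmv
      have : (f x - f' x x) - (0 - f' x xstar) = f x - f' x (x - xstar) := by
        rw [← hlin]; abel
      rwa [this] at hmv
    -- algebraic identity
    have hident : (x - (f' x).inverse (f x)) - xstar = B (f' x (x - xstar) - f x) := by
      have hBf : B (f' x (x - xstar)) = x - xstar := by
        have : (B * f' x) (x - xstar) = x - xstar := by
          rw [hBv, ← hv, v.inv_mul]; rfl
        simpa [ContinuousLinearMap.mul_apply] using this
      rw [hinv_eq, map_sub, hBf]; abel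
    rw [hident]
    calc ‖B (f' x (x - xstar) - f x)‖ ≤ ‖B‖ * ‖f' x (x - xstar) - f x‖ := B.le_opNorm _
      _ ≤ C * ((2 * ε) * ‖x - xstar‖) := by
          apply mul_le_mul hBnorm.le ?_ (norm_nonneg _) hCpos.le
          rw [← norm_neg, neg_sub]; exact hmv2
      _ = (1 / 2) * ‖x - xstar‖ := by
          rw [hε]; field_simp; ring
  refine ⟨δ, hδpos, hsub, fun x hxmem => ?_, key, fun x hxmem => ?_⟩
  · obtain ⟨v, hv⟩ := (hδ x hxmem).1.2
    exact ⟨ContinuousLinearEquiv.ofUnit v, hv⟩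
  · have := key x hxmem
    rw [Metric.mem_ball, dist_eq_norm] at *
    nlinarith [norm_nonneg (x - xstar)]
end

section
/- Let E be a real Banach space, Ω ⊆ E an open set, f : E → E Fréchet differentiable on Ω with derivative f', and x* ∈ Ω with f(x*) = 0, such that f' is continuous (in operator norm) at x* and f'(x*) is invertible. Then there exists δ > 0 with B_δ(x*) ⊆ Ω such that: (i) f'(x) is invertible for every x ∈ B_δ(x*); and (ii) every sequence (x_k) with x_0 ∈ B_δ(x*) satisfying the Newton recursion x_{k+1} = x_k − f'(x_k)⁻¹ (f x_k) for all k remains in B_δ(x*), converges to x*, and converges superlinearly, i.e., for every ε > 0 there exists K such that ‖x_{k+1} − x*‖ ≤ ε ‖x_k − x*‖ for all k ≥ K. -/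
open Filter Topology

theorem newton_key
    {E : Type*} [NormedAddCommGroup E] [NormedSpace ℝ E] [CompleteSpace E]
    (f : E → E) (f' : E → (E →L[ℝ] E))
    {xstar : E} (hdiffstar : HasFDerivAt f (f' xstar) xstar) (hsol : f xstar = 0)
    (hcont : ContinuousAt f' xstar)
    (hinv : ∃ e : E ≃L[ℝ] E, (e : E →L[ℝ] E) = f' xstar) :
    ∀ ε > 0, ∀ᶠ y in 𝓝 xstar, IsUnit (f' y) ∧
      ‖y - (f' y).inverse (f y) - xstar‖ ≤ ε * ‖y - xstar‖ := by
  obtain ⟨e0, he0⟩ := hinv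
  have hU0 : IsUnit (f' xstar) :=
    ⟨(ContinuousLinearEquiv.unitsEquiv ℝ E).symm e0, by rw [← he0]; rfl⟩
  intro ε hε
  set M : ℝ := ‖(f' xstar).inverse‖ + 1 with hM
  have hMpos : 0 < M := by positivity
  set c : ℝ := ε / (2 * M) with hc
  have hcpos : 0 < c := by positivity
  -- eventually a unit
  have hUev : ∀ᶠ y in 𝓝 xstar, IsUnit (f' y) := hcont (Units.isOpen.mem_nhds hU0)
  -- eventually the inverse's norm is at most M
  have hinvcont : ContinuousAt (fun y => (f' y).inverse) xstar := by
    have h1 : ContinuousAt Ring.inverse (f' xstar) :=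
      hU0.unit_spec ▸ NormedRing.inverse_continuousAt hU0.unit
    rw [ContinuousLinearMap.ringInverse_eq_inverse] at h1
    exact h1.comp hcont
  have hMev : ∀ᶠ y in 𝓝 xstar, ‖(f' y).inverse‖ ≤ M := by
    have : Tendsto (fun y => ‖(f' y).inverse‖) (𝓝 xstar) (𝓝 ‖(f' xstar).inverse‖) :=
      hinvcont.norm
    filter_upwards [this.eventually_lt_const (lt_add_one _)] with y hy using hy.le
  -- little-o bound from differentiability at xstar
  have hlo : ∀ᶠ y in 𝓝 xstar, ‖f y - f xstar - f' xstar (y - xstar)‖ ≤ c * ‖y - xstar‖ :=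
    Asymptotics.isLittleO_iff.mp hdiffstar.isLittleO hcpos
  -- continuity of f'
  have hc2 : ∀ᶠ y in 𝓝 xstar, ‖f' y - f' xstar‖ ≤ c := by
    have := Metric.tendsto_nhds.mp hcont c hcpos
    filter_upwards [this] with y hy
    rw [dist_eq_norm] at hy; exact hy.le
  filter_upwards [hUev, hMev, hlo, hc2] with y hU hMb hlob hc2b
  refine ⟨hU, ?_⟩
  set e : E ≃L[ℝ] E := ContinuousLinearEquiv.unitsEquiv ℝ E hU.unit with he
  have hecoe : (e : E →L[ℝ] E) = f' y := hU.unit_spec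
  have hinve : (f' y).inverse = (e.symm : E →L[ℝ] E) := by
    rw [← hecoe, ContinuousLinearMap.inverse_equiv]
  have key : y - (f' y).inverse (f y) - xstar = (f' y).inverse (f' y (y - xstar) - f y) := by
    rw [hinve]
    have h1 : (f' y) (y - xstar) = e (y - xstar) := by rw [← hecoe]; rfl
    rw [map_sub, h1]
    simp only [ContinuousLinearEquiv.coe_coe, ContinuousLinearEquiv.symm_apply_apply]
    abel
  have hdecomp : f' y (y - xstar) - f y
      = -(f y - f xstar - f' xstar (y - xstar)) + (f' y - f' xstar) (y - xstar) := by
    simp only [ContinuousLinearMap.sub_apply, hsol]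
    abel
  calc ‖y - (f' y).inverse (f y) - xstar‖
      = ‖(f' y).inverse (f' y (y - xstar) - f y)‖ := by rw [key]
    _ ≤ ‖(f' y).inverse‖ * ‖f' y (y - xstar) - f y‖ := ContinuousLinearMap.le_opNorm _ _
    _ ≤ M * ‖f' y (y - xstar) - f y‖ := by
        apply mul_le_mul_of_nonneg_right hMb (norm_nonneg _)
    _ ≤ M * (c * ‖y - xstar‖ + c * ‖y - xstar‖) := by
        apply mul_le_mul_of_nonneg_left _ hMpos.le
        rw [hdecomp]
        refine (norm_add_le _ _).trans (add_le_add ?_ ?_)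
        · rw [norm_neg]; exact hlob
        · exact ((f' y - f' xstar).le_opNorm _).trans
            (mul_le_mul_of_nonneg_right hc2b (norm_nonneg _))
    _ = ε * ‖y - xstar‖ := by rw [hc]; field_simp; ring

/-- Main theorem (normed-space form): under mere invertibility of the derivative at the
solution, the Newton sequence starting in a suitable ball is well defined, stays in the ball,
and converges superlinearly to the solution. -/
theorem newton_superlinear_convergence
    {E : Type*} [NormedAddCommGroup E] [NormedSpace ℝ E] [CompleteSpace E]
    {Ω : Set E} (hΩ : IsOpen Ω) (f : E → E) (f' : E → (E →L[ℝ] E))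
    (hdiff : ∀ x ∈ Ω, HasFDerivAt f (f' x) x)
    {xstar : E} (hx : xstar ∈ Ω) (hsol : f xstar = 0)
    (hcont : ContinuousAt f' xstar)
    (hinv : ∃ e : E ≃L[ℝ] E, (e : E →L[ℝ] E) = f' xstar) :
    ∃ δ > 0, Metric.ball xstar δ ⊆ Ω ∧
      (∀ x ∈ Metric.ball xstar δ, ∃ e : E ≃L[ℝ] E, (e : E →L[ℝ] E) = f' x) ∧
      ∀ x : ℕ → E, x 0 ∈ Metric.ball xstar δ →
        (∀ k : ℕ, x (k + 1) = x k - (f' (x k)).inverse (f (x k))) →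
        (∀ k : ℕ, x k ∈ Metric.ball xstar δ) ∧
        Tendsto x atTop (𝓝 xstar) ∧
        ∀ ε > 0, ∃ K : ℕ, ∀ k ≥ K, ‖x (k + 1) - xstar‖ ≤ ε * ‖x k - xstar‖ := by
  have key := newton_key f f' (hdiff xstar hx) hsol hcont hinv
  have h12 := key (1/2) (by norm_num)
  obtain ⟨δ, hδpos, hδ⟩ := Metric.eventually_nhds_iff_ball.mp
    (h12.and (hΩ.eventually_mem hx))
  refine ⟨δ, hδpos, fun y hy => (hδ y hy).2, fun y hy => ?_, ?_⟩
  · obtain ⟨⟨hU, _⟩, _⟩ := hδ y hy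
    exact ⟨ContinuousLinearEquiv.unitsEquiv ℝ E hU.unit, hU.unit_spec⟩
  intro x hx0 hrec
  have hball : ∀ k, x k ∈ Metric.ball xstar δ := by
    intro k
    induction k with
    | zero => exact hx0
    | succ k ih =>
      have hb := (hδ _ ih).1.2
      rw [← hrec k] at hb
      rw [mem_ball_iff_norm] at ih ⊢
      calc ‖x (k+1) - xstar‖ ≤ (1/2) * ‖x k - xstar‖ := hb
        _ ≤ ‖x k - xstar‖ := by nlinarith [norm_nonneg (x k - xstar)]
        _ < δ := ih
  have hhalf : ∀ k, ‖x (k+1) - xstar‖ ≤ (1/2) * ‖x k - xstar‖ := by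
    intro k
    have hb := (hδ _ (hball k)).1.2
    rwa [← hrec k] at hb
  have hgeo : ∀ k, ‖x k - xstar‖ ≤ (1/2)^k * ‖x 0 - xstar‖ := by
    intro k
    induction k with
    | zero => simp
    | succ k ih =>
      calc ‖x (k+1) - xstar‖ ≤ (1/2) * ‖x k - xstar‖ := hhalf k
        _ ≤ (1/2) * ((1/2)^k * ‖x 0 - xstar‖) := by linarith
        _ = (1/2)^(k+1) * ‖x 0 - xstar‖ := by ring
  have htend : Tendsto x atTop (𝓝 xstar) := by
    rw [tendsto_iff_norm_sub_tendsto_zero]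
    apply squeeze_zero (fun k => norm_nonneg _) hgeo
    have : Tendsto (fun k : ℕ => (1/2 : ℝ)^k) atTop (𝓝 0) :=
      tendsto_pow_atTop_nhds_zero_of_lt_one (by norm_num) (by norm_num)
    simpa using this.mul_const ‖x 0 - xstar‖
  refine ⟨hball, htend, ?_⟩
  intro ε hε
  obtain ⟨δ', hδ'pos, hδ'⟩ := Metric.eventually_nhds_iff_ball.mp (key ε hε)
  have := htend.eventually (Metric.ball_mem_nhds xstar hδ'pos)
  obtain ⟨K, hK⟩ := eventually_atTop.mp this
  refine ⟨K, fun k hk => ?_⟩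
  have := (hδ' _ (hK k hk)).2
  rwa [← hrec k] at this
end

section
/- Let E be a real Banach space, Ω ⊆ E an open set, f : E → E Fréchet differentiable on Ω with derivative f', and x* ∈ Ω with f(x*) = 0, such that f' is continuous (in operator norm) at x* and f'(x*) is invertible. Then there exists δ > 0 with B_δ(x*) ⊆ Ω such that f'(x) is invertible for every x ∈ B_δ(x*), and every sequence (x_k) with x_0 ∈ B_δ(x*) satisfying x_{k+1} = x_k − f'(x_k)⁻¹ (f x_k) for all k satisfies ‖x_{k+1} − x*‖ ≤ (1/2) ‖x_k − x*‖ for all k, and hence ‖x_k − x*‖ ≤ 2^{−k} ‖x_0 − x*‖ for all k; in particular x_k → x*. -/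
open Filter Topology

/-- Geometric (rate 1/2) convergence of the Newton sequence: on a suitable ball around the
solution the derivative is invertible and each Newton step halves the distance to the
solution, whence `‖x_k - x*‖ ≤ 2⁻ᵏ ‖x_0 - x*‖` and `x_k → x*`. -/
theorem newton_geometric_convergence
    {E : Type*} [NormedAddCommGroup E] [NormedSpace ℝ E] [CompleteSpace E]
    {Ω : Set E} (hΩ : IsOpen Ω) (f : E → E) (f' : E → (E →L[ℝ] E))
    (hdiff : ∀ x ∈ Ω, HasFDerivAt f (f' x) x)
    {xstar : E} (hx : xstar ∈ Ω) (hsol : f xstar = 0)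
    (hcont : ContinuousAt f' xstar)
    (hinv : ∃ e : E ≃L[ℝ] E, (e : E →L[ℝ] E) = f' xstar) :
    ∃ δ > 0, Metric.ball xstar δ ⊆ Ω ∧
      (∀ x ∈ Metric.ball xstar δ, ∃ e : E ≃L[ℝ] E, (e : E →L[ℝ] E) = f' x) ∧
      ∀ x : ℕ → E, x 0 ∈ Metric.ball xstar δ →
        (∀ k : ℕ, x (k + 1) = x k - (f' (x k)).inverse (f (x k))) →
        (∀ k : ℕ, ‖x (k + 1) - xstar‖ ≤ (1 / 2) * ‖x k - xstar‖) ∧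
        (∀ k : ℕ, ‖x k - xstar‖ ≤ (1 / 2) ^ k * ‖x 0 - xstar‖) ∧
        Tendsto x atTop (𝓝 xstar) := by
  classical
  obtain ⟨e0, he0⟩ := hinv
  -- `f' xstar` is a unit of the ring `E →L[ℝ] E`
  have hu0 : IsUnit (f' xstar) := by
    refine ⟨⟨f' xstar, (e0.symm : E →L[ℝ] E), ?_, ?_⟩, rfl⟩
    · rw [← he0]; ext v; simp
    · rw [← he0]; ext v; simp
  -- helper : a unit gives a continuous linear equiv
  have key : ∀ g : E →L[ℝ] E, IsUnit g → ∃ e : E ≃L[ℝ] E, (e : E →L[ℝ] E) = g := by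
    intro g hg
    refine ⟨ContinuousLinearEquiv.unitsEquiv ℝ E hg.unit, ?_⟩
    ext v
    rw [ContinuousLinearEquiv.coe_coe, ContinuousLinearEquiv.unitsEquiv_apply, hg.unit_spec]
  set K : ℝ := ‖Ring.inverse (f' xstar)‖ + 1 with hKdef
  have hK : 0 < K := by positivity
  set c : ℝ := 1 / (4 * K) with hcdef
  have hc : 0 < c := by positivity
  -- continuity of the inverse
  have hcontinv : ContinuousAt (fun y => Ring.inverse (f' y)) xstar := by
    have h1 : ContinuousAt Ring.inverse (f' xstar) := by
      have := NormedRing.inverse_continuousAt hu0.unit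
      rwa [hu0.unit_spec] at this
    exact h1.comp hcont
  have E1 : ∀ᶠ y in 𝓝 xstar, y ∈ Ω := hΩ.eventually_mem hx
  have E2 : ∀ᶠ y in 𝓝 xstar, IsUnit (f' y) :=
    hcont.eventually_mem (Units.isOpen.mem_nhds hu0)
  have E3 : ∀ᶠ y in 𝓝 xstar, ‖Ring.inverse (f' y)‖ < K := by
    have h2 : Tendsto (fun y => ‖Ring.inverse (f' y)‖) (𝓝 xstar)
        (𝓝 ‖Ring.inverse (f' xstar)‖) := hcontinv.norm
    exact h2.eventually (eventually_lt_nhds (by rw [hKdef]; linarith))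
  have E4 : ∀ᶠ y in 𝓝 xstar, ‖f' y - f' xstar‖ < c := by
    have h : Tendsto (fun y => ‖f' y - f' xstar‖) (𝓝 xstar) (𝓝 0) := by
      have h0 : Tendsto (fun y => f' y - f' xstar) (𝓝 xstar) (𝓝 (f' xstar - f' xstar)) :=
        hcont.sub tendsto_const_nhds
      rw [sub_self] at h0
      simpa using h0.norm
    exact h.eventually (eventually_lt_nhds hc)
  have E5 : ∀ᶠ y in 𝓝 xstar, ‖f y - f xstar - f' xstar (y - xstar)‖ ≤ c * ‖y - xstar‖ :=
    (hdiff xstar hx).isLittleO.def hc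
  have hall := E1.and (E2.and (E3.and (E4.and E5)))
  obtain ⟨δ, δpos, hδ⟩ := Metric.eventually_nhds_iff_ball.mp hall
  -- contraction step
  have step : ∀ y ∈ Metric.ball xstar δ,
      ‖(y - (f' y).inverse (f y)) - xstar‖ ≤ (1 / 2) * ‖y - xstar‖ := by
    intro y hy
    obtain ⟨hyΩ, hyU, hyK, hyc, hylo⟩ := hδ y hy
    obtain ⟨e, he⟩ := key (f' y) hyU
    have hinv_eq : (f' y).inverse = (e.symm : E →L[ℝ] E) := by
      rw [← he, ContinuousLinearMap.inverse_equiv]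
    have h1 : (f' y).inverse (f' y (y - xstar)) = y - xstar := by
      rw [hinv_eq, ← he]; simp
    have heq : y - (f' y).inverse (f y) - xstar
        = (f' y).inverse (f' y (y - xstar) - (f y - f xstar)) := by
      rw [map_sub, h1, hsol, sub_zero]; abel
    have hz : ‖f' y (y - xstar) - (f y - f xstar)‖ ≤ 2 * c * ‖y - xstar‖ := by
      have hsplit : f' y (y - xstar) - (f y - f xstar)
          = (f' y - f' xstar) (y - xstar)
            - (f y - f xstar - f' xstar (y - xstar)) := by
        simp only [ContinuousLinearMap.sub_apply]; abel
      rw [hsplit]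
      calc ‖(f' y - f' xstar) (y - xstar) - (f y - f xstar - f' xstar (y - xstar))‖
          ≤ ‖(f' y - f' xstar) (y - xstar)‖ + ‖f y - f xstar - f' xstar (y - xstar)‖ :=
            norm_sub_le _ _
        _ ≤ ‖f' y - f' xstar‖ * ‖y - xstar‖ + c * ‖y - xstar‖ :=
            add_le_add ((f' y - f' xstar).le_opNorm _) hylo
        _ ≤ c * ‖y - xstar‖ + c * ‖y - xstar‖ := by
            have := norm_nonneg (y - xstar)
            nlinarith
        _ = 2 * c * ‖y - xstar‖ := by ring
    have hKinv : ‖(f' y).inverse‖ < K := by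
      rw [← ContinuousLinearMap.ringInverse_eq_inverse]
      exact hyK
    calc ‖y - (f' y).inverse (f y) - xstar‖
        = ‖(f' y).inverse (f' y (y - xstar) - (f y - f xstar))‖ := by rw [heq]
      _ ≤ ‖(f' y).inverse‖ * ‖f' y (y - xstar) - (f y - f xstar)‖ :=
          ContinuousLinearMap.le_opNorm _ _
      _ ≤ K * (2 * c * ‖y - xstar‖) := by
          gcongr
      _ = (1 / 2) * ‖y - xstar‖ := by
          rw [hcdef]; field_simp; ring
  refine ⟨δ, δpos, fun y hy => (hδ y hy).1, fun y hy => key _ (hδ y hy).2.1, ?_⟩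
  intro x hx0 hrec
  -- all iterates stay in the ball
  have hball : ∀ k, x k ∈ Metric.ball xstar δ := by
    intro k
    induction k with
    | zero => exact hx0
    | succ n ih =>
      have h := step (x n) ih
      rw [← hrec n] at h
      rw [Metric.mem_ball, dist_eq_norm]
      rw [Metric.mem_ball, dist_eq_norm] at ih
      have hnn : (0:ℝ) ≤ ‖x n - xstar‖ := norm_nonneg _
      nlinarith
  have hhalf : ∀ k, ‖x (k + 1) - xstar‖ ≤ (1 / 2) * ‖x k - xstar‖ := by
    intro k
    have h := step (x k) (hball k)
    rwa [← hrec k] at h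
  have hpow : ∀ k, ‖x k - xstar‖ ≤ (1 / 2) ^ k * ‖x 0 - xstar‖ := by
    intro k
    induction k with
    | zero => simp
    | succ n ih =>
      calc ‖x (n + 1) - xstar‖ ≤ (1 / 2) * ‖x n - xstar‖ := hhalf n
        _ ≤ (1 / 2) * ((1 / 2) ^ n * ‖x 0 - xstar‖) := by linarith
        _ = (1 / 2) ^ (n + 1) * ‖x 0 - xstar‖ := by ring
  refine ⟨hhalf, hpow, ?_⟩
  rw [tendsto_iff_norm_sub_tendsto_zero]
  have hlim : Tendsto (fun k : ℕ => (1 / 2 : ℝ) ^ k * ‖x 0 - xstar‖) atTop (𝓝 0) := by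
    have := (tendsto_pow_atTop_nhds_zero_of_lt_one (by norm_num : (0:ℝ) ≤ 1 / 2)
      (by norm_num : (1 / 2 : ℝ) < 1)).mul_const ‖x 0 - xstar‖
    simpa using this
  exact squeeze_zero (fun k => norm_nonneg _) hpow hlim
end
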